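/- Let x : [0, ∞) → ℝⁿ be a function and let κ > 0, ε₀ > 0 be such that ‖x(s) − x(t)‖ ≤ κ whenever s, t ∈ [0, ∞) satisfy |s − t| ≤ ε₀. Then there exists a continuously differentiable function y : [0, ∞) → ℝⁿ such that ‖y(t) − x(t)‖ ≤ 2κ and ‖y'(t)‖ ≤ 2κ/ε₀ for all t ≥ 0. -/

import Mathlib

open MeasureTheory intervalIntegral

section Stmt14Aux

variable {n : ℕ}

/-- the piecewise-constant lattice sampling of `x` -/
noncomputable def stmt14g (x : ℝ → EuclideanSpace ℝ (Fin n)) (ε₀ : ℝ) :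
    ℝ → EuclideanSpace ℝ (Fin n) :=
  fun s => x (ε₀ * (⌊s / ε₀⌋₊ : ℕ))

lemma stmt14g_measurable (x : ℝ → EuclideanSpace ℝ (Fin n)) (ε₀ : ℝ) :
    Measurable (stmt14g x ε₀) := by
  have h1 : Measurable fun s : ℝ => ⌊s / ε₀⌋₊ :=
    Nat.measurable_floor.comp (measurable_id.div_const ε₀)
  exact (measurable_from_top (f := fun k : ℕ => x (ε₀ * (k : ℕ)))).comp h1

lemma stmt14_lattice_bound (x : ℝ → EuclideanSpace ℝ (Fin n)) {κ ε₀ : ℝ}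
    (hε₀ : 0 < ε₀)
    (hx : ∀ s t : ℝ, 0 ≤ s → 0 ≤ t → |s - t| ≤ ε₀ → ‖x s - x t‖ ≤ κ) :
    ∀ m : ℕ, ‖x (ε₀ * m)‖ ≤ ‖x 0‖ + m * κ := by
  intro m
  induction m with
  | zero => simp
  | succ m ih =>
    have h1 : ‖x (ε₀ * (m + 1 : ℕ)) - x (ε₀ * m)‖ ≤ κ := by
      apply hx _ _ (by positivity) (by positivity)
      have : ε₀ * ((m : ℝ) + 1) - ε₀ * m = ε₀ := by ring
      rw [Nat.cast_add, Nat.cast_one, this, abs_of_pos hε₀]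
    calc ‖x (ε₀ * (m + 1 : ℕ))‖
        ≤ ‖x (ε₀ * m)‖ + ‖x (ε₀ * (m + 1 : ℕ)) - x (ε₀ * m)‖ := by
          simpa using norm_add_le (x (ε₀ * m)) (x (ε₀ * (m + 1 : ℕ)) - x (ε₀ * m))
      _ ≤ (‖x 0‖ + m * κ) + κ := add_le_add ih h1
      _ = ‖x 0‖ + (m + 1 : ℕ) * κ := by push_cast; ring

lemma stmt14g_intervalIntegrable (x : ℝ → EuclideanSpace ℝ (Fin n)) {κ ε₀ : ℝ}
    (hκ : 0 < κ) (hε₀ : 0 < ε₀)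
    (hx : ∀ s t : ℝ, 0 ≤ s → 0 ≤ t → |s - t| ≤ ε₀ → ‖x s - x t‖ ≤ κ) :
    ∀ a b : ℝ, IntervalIntegrable (stmt14g x ε₀) volume a b := by
  intro a b
  rw [intervalIntegrable_iff]
  apply Measure.integrableOn_of_bounded (M := ‖x 0‖ + ⌊(max a b) / ε₀⌋₊ * κ)
    measure_Ioc_lt_top.ne ((stmt14g_measurable x ε₀).aestronglyMeasurable)
  filter_upwards [ae_restrict_mem measurableSet_Ioc] with s hs
  have hsb : s ≤ max a b := hs.2
  have hmono : (⌊s / ε₀⌋₊ : ℝ) * κ ≤ (⌊(max a b) / ε₀⌋₊ : ℝ) * κ := by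
    have h2 : ⌊s / ε₀⌋₊ ≤ ⌊(max a b) / ε₀⌋₊ := Nat.floor_mono (by gcongr)
    exact mul_le_mul_of_nonneg_right (by exact_mod_cast h2) hκ.le
  calc ‖stmt14g x ε₀ s‖ ≤ ‖x 0‖ + (⌊s / ε₀⌋₊ : ℝ) * κ :=
        stmt14_lattice_bound x hε₀ hx ⌊s / ε₀⌋₊
    _ ≤ ‖x 0‖ + (⌊(max a b) / ε₀⌋₊ : ℝ) * κ := by linarith

end Stmt14Aux

set_option maxHeartbeats 1000000 in
/-- From a (possibly discontinuous) family `x : [0,∞) → ℝⁿ` moving at most `κ`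
in any time interval of length `ε₀`, one can construct a `C¹` family `y` with
`‖y(t) - x(t)‖ ≤ 2κ` and `‖y'(t)‖ ≤ 2κ/ε₀` for all `t ≥ 0`. -/
theorem stmt14 (n : ℕ) (x : ℝ → EuclideanSpace ℝ (Fin n))
    (κ ε₀ : ℝ) (hκ : 0 < κ) (hε₀ : 0 < ε₀)
    (hx : ∀ s t : ℝ, 0 ≤ s → 0 ≤ t → |s - t| ≤ ε₀ → ‖x s - x t‖ ≤ κ) :
    ∃ y : ℝ → EuclideanSpace ℝ (Fin n), ContDiff ℝ 1 y ∧
      ∀ t : ℝ, 0 ≤ t → ‖y t - x t‖ ≤ 2 * κ ∧ ‖deriv y t‖ ≤ 2 * κ / ε₀ := by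
  set g := stmt14g x ε₀ with hg_def
  have hgi : ∀ a b : ℝ, IntervalIntegrable g volume a b :=
    stmt14g_intervalIntegrable x hκ hε₀ hx
  -- two-step estimate: points at distance ≤ 2ε₀ move by ≤ 2κ
  have hx2 : ∀ s t : ℝ, 0 ≤ s → 0 ≤ t → |s - t| ≤ 2 * ε₀ → ‖x s - x t‖ ≤ 2 * κ := by
    intro s t hs ht hst
    set m := (s + t) / 2 with hm
    have hm0 : 0 ≤ m := by positivity
    have h1 : |s - m| ≤ ε₀ := by
      rw [abs_le] at hst ⊢; constructor <;> [linarith [hst.1]; linarith [hst.2]]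
    have h2 : |m - t| ≤ ε₀ := by
      rw [abs_le] at hst ⊢; constructor <;> [linarith [hst.1]; linarith [hst.2]]
    calc ‖x s - x t‖ = ‖(x s - x m) + (x m - x t)‖ := by rw [sub_add_sub_cancel]
      _ ≤ ‖x s - x m‖ + ‖x m - x t‖ := norm_add_le _ _
      _ ≤ κ + κ := add_le_add (hx s m hs hm0 h1) (hx m t hm0 ht h2)
      _ = 2 * κ := by ring
  -- key pointwise bound B
  have hB : ∀ t u : ℝ, 0 ≤ t → t ≤ u → u ≤ t + 2 * ε₀ → ‖g u - x t‖ ≤ 2 * κ := by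
    intro t u ht htu hu2
    have hu0 : (0:ℝ) ≤ u := le_trans ht htu
    set a := ε₀ * (⌊u / ε₀⌋₊ : ℕ) with ha
    have ha0 : 0 ≤ a := by positivity
    have hau : a ≤ u := by
      have := Nat.floor_le (a := u / ε₀) (by positivity)
      calc a = ε₀ * (⌊u / ε₀⌋₊ : ℝ) := rfl
        _ ≤ ε₀ * (u / ε₀) := by nlinarith
        _ = u := by field_simp
    have hua : u < a + ε₀ := by
      have := Nat.lt_floor_add_one (u / ε₀)
      have h3 : u / ε₀ < (⌊u / ε₀⌋₊ : ℝ) + 1 := by exact_mod_cast this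
      have : u < ε₀ * ((⌊u / ε₀⌋₊ : ℝ) + 1) := by
        calc u = ε₀ * (u / ε₀) := by field_simp
          _ < ε₀ * ((⌊u / ε₀⌋₊ : ℝ) + 1) := by nlinarith
      linarith [this, mul_add ε₀ ((⌊u / ε₀⌋₊ : ℝ)) 1]
    have hat : |a - t| ≤ 2 * ε₀ := by
      rw [abs_le]; constructor <;> linarith
    exact hx2 a t ha0 ht hat
  -- key pointwise bound C
  have hC : ∀ u : ℝ, ‖g (u + ε₀) - g u‖ ≤ κ := by
    intro u
    set k := ⌊u / ε₀⌋₊ with hk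
    set k' := ⌊(u + ε₀) / ε₀⌋₊ with hk'
    have hdiv : (u + ε₀) / ε₀ = u / ε₀ + 1 := by field_simp
    have hkk' : k ≤ k' := Nat.floor_mono (by rw [hdiv]; linarith)
    have hk'k : k' ≤ k + 1 := by
      rcases le_or_gt 0 (u / ε₀) with h | h
      · rw [hk', hdiv]
        have := Nat.floor_add_natCast h 1
        simp only [Nat.cast_one] at this
        omega
      · have : (u + ε₀) / ε₀ ≤ 1 := by rw [hdiv]; linarith
        have h1 : k' ≤ ⌊(1:ℝ)⌋₊ := Nat.floor_mono this
        simp at h1; omega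
    have hdist : |ε₀ * (k' : ℝ) - ε₀ * (k : ℝ)| ≤ ε₀ := by
      rw [abs_le]
      have h1 : (k : ℝ) ≤ (k' : ℝ) := by exact_mod_cast hkk'
      have h2 : (k' : ℝ) ≤ (k : ℝ) + 1 := by exact_mod_cast hk'k
      constructor <;> nlinarith
    exact hx _ _ (by positivity) (by positivity) hdist
  -- the once-averaged function z
  have hF : Continuous fun t => ∫ s in (0:ℝ)..t, g s := continuous_primitive hgi 0
  set z : ℝ → EuclideanSpace ℝ (Fin n) :=
    fun t => ε₀⁻¹ • ∫ s in t..(t + ε₀), g s with hz_def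
  have hzeq : ∀ t : ℝ, (∫ s in t..(t + ε₀), g s)
      = (∫ s in (0:ℝ)..(t + ε₀), g s) - ∫ s in (0:ℝ)..t, g s := by
    intro t
    have h := integral_add_adjacent_intervals (μ := volume) (f := g) (hgi 0 t) (hgi t (t + ε₀))
    rw [eq_sub_iff_add_eq, add_comm, h]
  have hz : Continuous z := by
    refine Continuous.const_smul (g := fun t => ∫ s in t..(t + ε₀), g s) ?_ ε₀⁻¹
    have : (fun t => ∫ s in t..(t + ε₀), g s)
        = fun t => (∫ s in (0:ℝ)..(t + ε₀), g s) - ∫ s in (0:ℝ)..t, g s :=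
      funext hzeq
    rw [this]
    exact ((hF.comp (continuous_id.add continuous_const)).sub hF)
  -- bound on z near x
  have hzB : ∀ t s : ℝ, 0 ≤ t → t ≤ s → s ≤ t + ε₀ → ‖z s - x t‖ ≤ 2 * κ := by
    intro t s ht hts hst
    have hsub : z s - x t = ε₀⁻¹ • ∫ u in s..(s + ε₀), (g u - x t) := by
      rw [integral_sub (hgi s (s + ε₀)) intervalIntegrable_const, intervalIntegral.integral_const]
      simp only [add_sub_cancel_left, hz_def, smul_sub, smul_smul,
        inv_mul_cancel₀ hε₀.ne']
      rw [one_smul]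
    rw [hsub, norm_smul, norm_inv, Real.norm_eq_abs, abs_of_pos hε₀]
    have hint : ‖∫ u in s..(s + ε₀), (g u - x t)‖ ≤ 2 * κ * |s + ε₀ - s| := by
      apply intervalIntegral.norm_integral_le_of_norm_le_const
      intro u hu
      rw [Set.uIoc_of_le (by linarith)] at hu
      exact hB t u ht (by linarith [hu.1]) (by linarith [hu.2])
    have habs : |s + ε₀ - s| = ε₀ := by rw [add_sub_cancel_left, abs_of_pos hε₀]
    rw [habs] at hint
    calc ε₀⁻¹ * ‖∫ u in s..(s + ε₀), (g u - x t)‖ ≤ ε₀⁻¹ * (2 * κ * ε₀) := by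
          apply mul_le_mul_of_nonneg_left hint (by positivity)
      _ = 2 * κ := by field_simp
  -- bound on z differences
  have hzC : ∀ t : ℝ, ‖z (t + ε₀) - z t‖ ≤ κ := by
    intro t
    have hshift : (∫ s in (t + ε₀)..(t + ε₀ + ε₀), g s)
        = ∫ u in t..(t + ε₀), g (u + ε₀) := by
      rw [integral_comp_add_right]
    have hsub : z (t + ε₀) - z t = ε₀⁻¹ • ∫ u in t..(t + ε₀), (g (u + ε₀) - g u) := by
      have hint2 : IntervalIntegrable (fun u => g (u + ε₀)) volume t (t + ε₀) := by
        have := (hgi (t + ε₀) (t + ε₀ + ε₀)).comp_add_right ε₀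
        simpa using this
      rw [integral_sub hint2 (hgi t (t + ε₀)), ← hshift]
      simp only [hz_def, smul_sub]
    rw [hsub, norm_smul, norm_inv, Real.norm_eq_abs, abs_of_pos hε₀]
    have hint : ‖∫ u in t..(t + ε₀), (g (u + ε₀) - g u)‖ ≤ κ * |t + ε₀ - t| := by
      apply intervalIntegral.norm_integral_le_of_norm_le_const
      intro u _
      exact hC u
    have habs : |t + ε₀ - t| = ε₀ := by rw [add_sub_cancel_left, abs_of_pos hε₀]
    rw [habs] at hint
    calc ε₀⁻¹ * ‖∫ u in t..(t + ε₀), (g (u + ε₀) - g u)‖ ≤ ε₀⁻¹ * (κ * ε₀) := by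
          apply mul_le_mul_of_nonneg_left hint (by positivity)
      _ = κ := by field_simp
  -- the primitive of z
  set Z : ℝ → EuclideanSpace ℝ (Fin n) := fun t => ∫ s in (0:ℝ)..t, z s with hZ_def
  have hZd : ∀ t : ℝ, HasDerivAt Z (z t) t := by
    intro t
    exact integral_hasDerivAt_right (hz.intervalIntegrable 0 t)
      (hz.stronglyMeasurableAtFilter volume (nhds t)) hz.continuousAt
  set y : ℝ → EuclideanSpace ℝ (Fin n) := fun t => ε₀⁻¹ • (Z (t + ε₀) - Z t) with hy_def
  have hyd : ∀ t : ℝ, HasDerivAt y (ε₀⁻¹ • (z (t + ε₀) - z t)) t := by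
    intro t
    have h1 : HasDerivAt (fun u : ℝ => Z (u + ε₀)) ((1:ℝ) • z (t + ε₀)) t :=
      by have := (hZd (t + ε₀)).scomp t ((hasDerivAt_id t).add_const ε₀); exact this
    rw [one_smul] at h1
    exact (h1.sub (hZd t)).const_smul ε₀⁻¹
  have hyderiv : ∀ t : ℝ, deriv y t = ε₀⁻¹ • (z (t + ε₀) - z t) := fun t => (hyd t).deriv
  have hcd : ContDiff ℝ 1 y := by
    rw [contDiff_one_iff_deriv]
    refine ⟨fun t => (hyd t).differentiableAt, ?_⟩
    have hde : deriv y = fun t => ε₀⁻¹ • (z (t + ε₀) - z t) := funext hyderiv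
    rw [hde]
    exact ((hz.comp (continuous_id.add continuous_const)).sub hz).const_smul ε₀⁻¹
  refine ⟨y, hcd, fun t ht => ⟨?_, ?_⟩⟩
  · -- ‖y t - x t‖ ≤ 2κ
    have hadj := integral_add_adjacent_intervals (μ := volume) (f := z)
      (hz.intervalIntegrable 0 t) (hz.intervalIntegrable t (t + ε₀))
    have hZdiff : Z (t + ε₀) - Z t = ∫ s in t..(t + ε₀), z s := by
      simp only [hZ_def]
      rw [← hadj]; abel
    have hsub : y t - x t = ε₀⁻¹ • ∫ s in t..(t + ε₀), (z s - x t) := by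
      rw [integral_sub (hz.intervalIntegrable t (t + ε₀)) intervalIntegrable_const,
        intervalIntegral.integral_const]
      simp only [add_sub_cancel_left, hy_def, hZdiff, smul_sub, smul_smul,
        inv_mul_cancel₀ hε₀.ne']
      rw [one_smul, ← smul_sub, hZdiff]
    rw [hsub, norm_smul, norm_inv, Real.norm_eq_abs, abs_of_pos hε₀]
    have hint : ‖∫ s in t..(t + ε₀), (z s - x t)‖ ≤ 2 * κ * |t + ε₀ - t| := by
      apply intervalIntegral.norm_integral_le_of_norm_le_const
      intro s hs
      rw [Set.uIoc_of_le (by linarith)] at hs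
      exact hzB t s ht hs.1.le hs.2
    have habs : |t + ε₀ - t| = ε₀ := by rw [add_sub_cancel_left, abs_of_pos hε₀]
    rw [habs] at hint
    calc ε₀⁻¹ * ‖∫ s in t..(t + ε₀), (z s - x t)‖ ≤ ε₀⁻¹ * (2 * κ * ε₀) := by
          apply mul_le_mul_of_nonneg_left hint (by positivity)
      _ = 2 * κ := by field_simp
  · -- ‖deriv y t‖ ≤ 2κ/ε₀
    rw [hyderiv t, norm_smul, norm_inv, Real.norm_eq_abs, abs_of_pos hε₀]
    calc ε₀⁻¹ * ‖z (t + ε₀) - z t‖ ≤ ε₀⁻¹ * κ :=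
        mul_le_mul_of_nonneg_left (hzC t) (by positivity)
      _ = κ / ε₀ := by ring
      _ ≤ 2 * κ / ε₀ := by
        gcongr
        linarith
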